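/- Let Σ, Γ be finite nonempty alphabets, μ a probability distribution on Σ×Γ, m ≥ 2 an integer, and t : Σ×Γ → ℤ_m. Assume: (i) the bipartite graph with vertex parts Σ and Γ, in which x ∈ Σ is adjacent to y ∈ Γ iff (x,y) ∈ supp(μ), is connected; and (ii) the game has value less than 1, i.e., there are no f : Σ → ℤ_m, g : Γ → ℤ_m with f(x)+g(y) = t(x,y) for all (x,y) ∈ supp(μ). Let ω = exp(2πi/m) and T(x,y) = ω^{-t(x,y)}. Then there is a constant c > 0 such that for every n ≥ 1 and all functions F : Σ^n → 𝔻, G : Γ^n → 𝔻, |E_{(x,y)∼μ^{⊗n}}[F(x)·G(y)·Π_{i=1}^n T(x_i,y_i)]| ≤ 2^{-c·n}. -/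

import Mathlib

open Finset

attribute [local instance] Classical.propDecidable

/-- The bipartite graph with parts `X` and `Y` where `x` is adjacent to `y` iff `adj x y`
is connected. -/
def BipartiteConnected {X Y : Type*} (adj : X → Y → Prop) : Prop :=
  (SimpleGraph.fromRel (fun a b : X ⊕ Y =>
    ∃ x y, a = Sum.inl x ∧ b = Sum.inr y ∧ adj x y)).Connected

/-- The complex `m`-th root of unity `exp(2πi/m)`. -/
noncomputable def rootOfUnity' (m : ℕ) : ℂ := Complex.exp (2 * Real.pi * Complex.I / m)


lemma aux_walk_const {V : Type*} {α : Sort*} (G : SimpleGraph V) (h : V → α)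
    (hadj : ∀ a b, G.Adj a b → h a = h b) :
    ∀ {a b : V}, G.Reachable a b → h a = h b := by
  intro a b hr
  obtain ⟨p⟩ := hr
  induction p with
  | nil => rfl
  | cons hadj' p ih => exact (hadj _ _ hadj').trans ih

lemma aux_sq_identity {ι : Type*} (s : Finset ι) (w a : ι → ℝ) :
    ∑ i ∈ s, ∑ j ∈ s, w i * w j * (a i - a j) ^ 2
      = 2 * ((∑ i ∈ s, w i) * (∑ i ∈ s, w i * a i ^ 2)) - 2 * (∑ i ∈ s, w i * a i) ^ 2 := by
  have h1 : ∑ i ∈ s, ∑ j ∈ s, w i * w j * (a i - a j) ^ 2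
      = ∑ i ∈ s, ∑ j ∈ s, ((w i * a i ^ 2) * w j - 2 * ((w i * a i) * (w j * a j))
          + w i * (w j * a j ^ 2)) :=
    Finset.sum_congr rfl fun i _ => Finset.sum_congr rfl fun j _ => by ring
  rw [h1]
  simp only [Finset.sum_add_distrib, Finset.sum_sub_distrib, ← Finset.mul_sum, ← Finset.sum_mul]
  ring

lemma aux_re_eq_abs {z : ℂ} (h : z.re = ‖z‖) : z = (z.re : ℂ) := by
  have h2 : ‖z‖ ^ 2 = z.re ^ 2 + z.im ^ 2 := by
    rw [Complex.sq_norm, Complex.normSq_apply]; ring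
  rw [← h] at h2
  have h3 : z.im ^ 2 = 0 := by linarith
  have h4 : z.im = 0 := by
    exact pow_eq_zero_iff (two_ne_zero) |>.1 h3
  exact Complex.ext (by simp) (by simp [h4])

lemma aux_triangle_eq {ι : Type*} (s : Finset ι) (f : ι → ℂ)
    (h : ‖∑ j ∈ s, f j‖ = ∑ j ∈ s, ‖f j‖) :
    ∀ i ∈ s, (‖∑ j ∈ s, f j‖ : ℂ) * f i
      = (‖f i‖ : ℂ) * ∑ j ∈ s, f j := by
  intro i hi
  set S := ∑ j ∈ s, f j with hS
  by_cases hS0 : S = 0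
  · have hzero : ∑ j ∈ s, ‖f j‖ = 0 := by rw [← h, hS0]; simp
    have hall : ∀ j ∈ s, ‖f j‖ = 0 :=
      (Finset.sum_eq_zero_iff_of_nonneg (fun j _ => norm_nonneg _)).1 hzero
    have : f i = 0 := by simpa using hall i hi
    simp [hS0, this]
  · have key : ∀ j ∈ s, ((starRingEnd ℂ) S * f j).re = ‖S‖ * ‖f j‖ := by
      have hsum : ∑ j ∈ s, ((starRingEnd ℂ) S * f j).re = ‖S‖ ^ 2 := by
        rw [← Complex.re_sum, ← Finset.mul_sum, ← hS]
        rw [show (starRingEnd ℂ) S * S = ((Complex.normSq S : ℝ) : ℂ) by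
          rw [mul_comm]; exact Complex.mul_conj S]
        simp [← Complex.sq_norm, ← Complex.ofReal_pow]
      have hle : ∀ j ∈ s, ((starRingEnd ℂ) S * f j).re ≤ ‖S‖ * ‖f j‖ := by
        intro j _
        calc ((starRingEnd ℂ) S * f j).re ≤ ‖(starRingEnd ℂ) S * f j‖ :=
              Complex.re_le_norm _
          _ = ‖S‖ * ‖f j‖ := by
              rw [norm_mul, Complex.norm_conj]
      intro j hj
      by_contra hne
      have hlt : ((starRingEnd ℂ) S * f j).re < ‖S‖ * ‖f j‖ :=
        lt_of_le_of_ne (hle j hj) hne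
      have hstrict : ∑ k ∈ s, ((starRingEnd ℂ) S * f k).re
          < ∑ k ∈ s, ‖S‖ * ‖f k‖ :=
        Finset.sum_lt_sum (fun k hk => hle k hk) ⟨j, hj, hlt⟩
      rw [hsum, ← Finset.mul_sum, ← h, sq] at hstrict
      exact lt_irrefl _ hstrict
    have heq : (starRingEnd ℂ) S * f i = ((‖S‖ * ‖f i‖ : ℝ) : ℂ) := by
      have h5 := aux_re_eq_abs (z := (starRingEnd ℂ) S * f i)
        (by rw [key i hi, norm_mul, Complex.norm_conj])
      rw [h5, key i hi]
    have habsne : (‖S‖ : ℂ) ≠ 0 := by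
      simpa using (norm_ne_zero_iff.2 hS0)
    have hthis : S * ((starRingEnd ℂ) S * f i)
        = S * ((‖S‖ * ‖f i‖ : ℝ) : ℂ) := by rw [heq]
    rw [← mul_assoc, Complex.mul_conj] at hthis
    apply mul_left_cancel₀ habsne
    calc (‖S‖ : ℂ) * ((‖S‖ : ℂ) * f i)
        = ((Complex.normSq S : ℝ) : ℂ) * f i := by
          rw [← Complex.sq_norm]; push_cast; ring
      _ = S * ((‖S‖ * ‖f i‖ : ℝ) : ℂ) := hthis
      _ = (‖S‖ : ℂ) * ((‖f i‖ : ℂ) * S) := by push_cast; ring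


lemma aux_tensor {Xt Yt : Type*} [Fintype Xt] [Fintype Yt]
    (A : Xt → Yt → ℂ) (wX : Xt → ℝ) (wY : Yt → ℝ)
    (hwX : ∀ x, 0 < wX x) (hwY : ∀ y, 0 ≤ wY y) (ρ : ℝ)
    (H : ∀ g : Yt → ℂ, ∑ x, ‖∑ y, A x y * g y‖ ^ 2 / wX x
        ≤ ρ ^ 2 * ∑ y, wY y * ‖g y‖ ^ 2) :
    ∀ (n : ℕ) (G : (Fin n → Yt) → ℂ),
      ∑ x : Fin n → Xt, ‖∑ y : Fin n → Yt, (∏ i, A (x i) (y i)) * G y‖ ^ 2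
          / ∏ i, wX (x i)
        ≤ ρ ^ (2 * n) * ∑ y : Fin n → Yt, (∏ i, wY (y i)) * ‖G y‖ ^ 2 := by
  intro n
  induction n with
  | zero =>
      intro G
      simp [Finset.univ_unique]
  | succ n ih =>
      intro G
      have hρ2 : (0:ℝ) ≤ ρ ^ 2 := sq_nonneg ρ
      have hsumX : ∀ (f : (Fin (n+1) → Xt) → ℝ),
          ∑ x, f x = ∑ x₀ : Xt, ∑ x' : Fin n → Xt, f (Fin.cons (α := fun _ => Xt) x₀ x') := by
        intro f
        rw [← (Fin.consEquiv fun _ => Xt).sum_comp f, Fintype.sum_prod_type]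
        rfl
      have hsumY : ∀ (f : (Fin (n+1) → Yt) → ℂ),
          ∑ y, f y = ∑ y₀ : Yt, ∑ y' : Fin n → Yt, f (Fin.cons (α := fun _ => Yt) y₀ y') := by
        intro f
        rw [← (Fin.consEquiv fun _ => Yt).sum_comp f, Fintype.sum_prod_type]
        rfl
      have hsumYR : ∀ (f : (Fin (n+1) → Yt) → ℝ),
          ∑ y, f y = ∑ y₀ : Yt, ∑ y' : Fin n → Yt, f (Fin.cons (α := fun _ => Yt) y₀ y') := by
        intro f
        rw [← (Fin.consEquiv fun _ => Yt).sum_comp f, Fintype.sum_prod_type]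
        rfl
      set g : (Fin n → Xt) → Yt → ℂ := fun x' y₀ =>
        ∑ y' : Fin n → Yt, (∏ i, A (x' i) (y' i)) * G (Fin.cons (α := fun _ => Yt) y₀ y') with hg
      have hinner : ∀ (x₀ : Xt) (x' : Fin n → Xt),
          ∑ y : Fin (n+1) → Yt, (∏ i, A (Fin.cons (α := fun _ => Xt) x₀ x' i) (y i)) * G y
            = ∑ y₀ : Yt, A x₀ y₀ * g x' y₀ := by
        intro x₀ x'
        rw [hsumY]
        refine Finset.sum_congr rfl fun y₀ _ => ?_
        rw [hg, Finset.mul_sum]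
        refine Finset.sum_congr rfl fun y' _ => ?_
        simp only [Fin.prod_univ_succ, Fin.cons_zero, Fin.cons_succ]
        ring
      have hP : ∀ (x' : Fin n → Xt), (0:ℝ) < ∏ i, wX (x' i) :=
        fun x' => Finset.prod_pos fun i _ => hwX (x' i)
      calc ∑ x : Fin (n+1) → Xt,
              ‖∑ y : Fin (n+1) → Yt, (∏ i, A (x i) (y i)) * G y‖ ^ 2
                / ∏ i, wX (x i)
          = ∑ x' : Fin n → Xt, (∑ x₀ : Xt,
              ‖∑ y₀ : Yt, A x₀ y₀ * g x' y₀‖ ^ 2 / wX x₀) * (∏ i, wX (x' i))⁻¹ := by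
            rw [hsumX, Finset.sum_comm]
            refine Finset.sum_congr rfl fun x' _ => ?_
            rw [Finset.sum_mul]
            refine Finset.sum_congr rfl fun x₀ _ => ?_
            rw [hinner x₀ x']
            rw [show (∏ i, wX (Fin.cons (α := fun _ => Xt) x₀ x' i))
                = wX x₀ * ∏ i, wX (x' i) by
              simp only [Fin.prod_univ_succ, Fin.cons_zero, Fin.cons_succ]]
            rw [div_mul_eq_div_div_swap, div_eq_mul_inv, div_eq_mul_inv]
            ring
        _ ≤ ∑ x' : Fin n → Xt, (ρ ^ 2 * ∑ y₀ : Yt, wY y₀ * ‖g x' y₀‖ ^ 2)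
              * (∏ i, wX (x' i))⁻¹ := by
            refine Finset.sum_le_sum fun x' _ => ?_
            exact mul_le_mul_of_nonneg_right (H (g x')) (inv_nonneg.2 (hP x').le)
        _ = ∑ y₀ : Yt, ρ ^ 2 * (wY y₀ *
              ∑ x' : Fin n → Xt, ‖g x' y₀‖ ^ 2 / ∏ i, wX (x' i)) := by
            have lhs_eq : ∀ x' : Fin n → Xt,
                (ρ ^ 2 * ∑ y₀ : Yt, wY y₀ * ‖g x' y₀‖ ^ 2) * (∏ i, wX (x' i))⁻¹
                  = ∑ y₀ : Yt, ρ ^ 2 * (wY y₀ *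
                      (‖g x' y₀‖ ^ 2 / ∏ i, wX (x' i))) := by
              intro x'
              rw [Finset.mul_sum, Finset.sum_mul]
              exact Finset.sum_congr rfl fun y₀ _ => by rw [div_eq_mul_inv]; ring
            simp only [lhs_eq]
            rw [Finset.sum_comm]
            refine Finset.sum_congr rfl fun y₀ _ => ?_
            rw [Finset.mul_sum, Finset.mul_sum]
        _ ≤ ∑ y₀ : Yt, ρ ^ 2 * (wY y₀ * (ρ ^ (2 * n) *
              ∑ y' : Fin n → Yt, (∏ i, wY (y' i))
                * ‖G (Fin.cons (α := fun _ => Yt) y₀ y')‖ ^ 2)) := by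
            refine Finset.sum_le_sum fun y₀ _ => ?_
            exact mul_le_mul_of_nonneg_left
              (mul_le_mul_of_nonneg_left (ih (fun y' => G (Fin.cons (α := fun _ => Yt) y₀ y')))
                (hwY y₀)) hρ2
        _ = ρ ^ (2 * (n+1)) * ∑ y : Fin (n+1) → Yt,
              (∏ i, wY (y i)) * ‖G y‖ ^ 2 := by
            rw [hsumYR, Finset.mul_sum]
            refine Finset.sum_congr rfl fun y₀ _ => ?_
            rw [Finset.mul_sum, Finset.mul_sum, Finset.mul_sum, Finset.mul_sum]
            refine Finset.sum_congr rfl fun y' _ => ?_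
            rw [show (∏ i, wY (Fin.cons (α := fun _ => Yt) y₀ y' i))
                = wY y₀ * ∏ i, wY (y' i) by
              simp only [Fin.prod_univ_succ, Fin.cons_zero, Fin.cons_succ]]
            rw [show 2 * (n+1) = 2 + 2 * n by ring, pow_add]
            ring



lemma aux_nbrX {X Y : Type*} [Nonempty Y] (adj : X → Y → Prop)
    (h : BipartiteConnected adj) (x : X) : ∃ y, adj x y := by
  obtain ⟨y₀⟩ := ‹Nonempty Y›
  obtain ⟨p⟩ := h.preconnected (Sum.inl x) (Sum.inr y₀)
  cases p with
  | cons hadj p =>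
      rw [SimpleGraph.fromRel_adj] at hadj
      obtain ⟨-, h1 | h2⟩ := hadj
      · obtain ⟨x', y', hx, hb, hxy⟩ := h1
        exact ⟨y', by rwa [← Sum.inl.inj hx] at hxy⟩
      · obtain ⟨x', y', hb, hx, hxy⟩ := h2
        simp at hx

lemma aux_nbrY {X Y : Type*} [Nonempty X] (adj : X → Y → Prop)
    (h : BipartiteConnected adj) (y : Y) : ∃ x, adj x y := by
  obtain ⟨x₀⟩ := ‹Nonempty X›
  obtain ⟨p⟩ := h.preconnected (Sum.inr y) (Sum.inl x₀)
  cases p with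
  | cons hadj p =>
      rw [SimpleGraph.fromRel_adj] at hadj
      obtain ⟨-, h1 | h2⟩ := hadj
      · obtain ⟨x', y', hx, hb, hxy⟩ := h1
        simp at hx
      · obtain ⟨x', y', hb, hy, hxy⟩ := h2
        exact ⟨x', by rwa [← Sum.inr.inj hy] at hxy⟩

lemma aux_single {Xt Yt : Type*} [Fintype Xt] [Fintype Yt] [Nonempty Xt] [Nonempty Yt]
    (μ : Xt × Yt → ℝ) (hμ0 : ∀ p, 0 ≤ μ p) (hμ1 : ∑ p, μ p = 1)
    (m : ℕ) (hm : 2 ≤ m) (t : Xt × Yt → ZMod m)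
    (hconn : BipartiteConnected (fun x y => 0 < μ (x, y)))
    (hval : ¬ ∃ (f : Xt → ZMod m) (g : Yt → ZMod m),
      ∀ x y, 0 < μ (x, y) → f x + g y = t (x, y)) :
    ∃ ρ : ℝ, 0 ≤ ρ ∧ ρ < 1 ∧
      ∀ g : Yt → ℂ,
        ∑ x, ‖∑ y,
            (((μ (x, y) : ℝ) : ℂ) * rootOfUnity' m ^ (- t (x, y)).val) * g y‖ ^ 2
            / (∑ y, μ (x, y))
          ≤ ρ ^ 2 * ∑ y, (∑ x, μ (x, y)) * ‖g y‖ ^ 2 := by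
  classical
  haveI : NeZero m := ⟨by omega⟩
  set ω : ℂ := rootOfUnity' m with hω
  have hprim : IsPrimitiveRoot ω m := Complex.isPrimitiveRoot_exp m (by omega)
  have habsω : ‖ω‖ = 1 := by
    rw [hω, rootOfUnity', show (2 * ↑Real.pi * Complex.I / ↑m : ℂ)
      = ((2 * Real.pi / m : ℝ) : ℂ) * Complex.I by push_cast; ring,
      Complex.norm_exp_ofReal_mul_I]
  set A : Xt → Yt → ℂ := fun x y => ((μ (x, y) : ℝ) : ℂ) * ω ^ (- t (x, y)).val with hA
  have habsA : ∀ x y, ‖A x y‖ = μ (x, y) := by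
    intro x y
    rw [hA]
    simp only [norm_mul, norm_pow, Complex.norm_real, Real.norm_eq_abs, habsω, one_pow, mul_one]
    exact abs_of_nonneg (hμ0 _)
  set wX : Xt → ℝ := fun x => ∑ y, μ (x, y) with hwXdef
  set wY : Yt → ℝ := fun y => ∑ x, μ (x, y) with hwYdef
  have hwX : ∀ x, 0 < wX x := by
    intro x
    obtain ⟨y, hy⟩ := aux_nbrX _ hconn x
    exact lt_of_lt_of_le hy (Finset.single_le_sum (fun y' _ => hμ0 (x, y')) (mem_univ y))
  have hwY : ∀ y, 0 < wY y := by
    intro y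
    obtain ⟨x, hx⟩ := aux_nbrY _ hconn y
    exact lt_of_lt_of_le hx (Finset.single_le_sum (fun x' _ => hμ0 (x', y)) (mem_univ x))
  have hsumwY : ∑ y, wY y = 1 := by
    rw [hwYdef, ← hμ1, Fintype.sum_prod_type, Finset.sum_comm]
  have hsumwX : ∑ x, wX x = 1 := by rw [hwXdef, ← hμ1, Fintype.sum_prod_type]
  set N : (Yt → ℂ) → ℝ := fun g => ∑ y, wY y * ‖g y‖ ^ 2 with hN
  set Q : (Yt → ℂ) → ℝ := fun g => ∑ x, ‖∑ y, A x y * g y‖ ^ 2 / wX x with hQ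
  -- basic pointwise bounds
  have htriv : ∀ (g : Yt → ℂ) (x : Xt),
      ‖∑ y, A x y * g y‖ ≤ ∑ y, μ (x, y) * ‖g y‖ := by
    intro g x
    refine le_trans (norm_sum_le _ _) (le_of_eq ?_)
    exact Finset.sum_congr rfl fun y _ => by rw [norm_mul, habsA]
  have hcs : ∀ (x : Xt) (a : Yt → ℝ),
      (∑ y, μ (x, y) * a y) ^ 2 ≤ wX x * ∑ y, μ (x, y) * a y ^ 2 := by
    intro x a
    have h1 := Finset.sum_mul_sq_le_sq_mul_sq univ
      (fun y => Real.sqrt (μ (x, y))) (fun y => Real.sqrt (μ (x, y)) * a y)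
    calc (∑ y, μ (x, y) * a y) ^ 2
        = (∑ y, Real.sqrt (μ (x, y)) * (Real.sqrt (μ (x, y)) * a y)) ^ 2 := by
          congr 1
          exact Finset.sum_congr rfl fun y _ => by
            rw [← mul_assoc, Real.mul_self_sqrt (hμ0 _)]
      _ ≤ (∑ y, Real.sqrt (μ (x, y)) ^ 2) * ∑ y, (Real.sqrt (μ (x, y)) * a y) ^ 2 := h1
      _ = wX x * ∑ y, μ (x, y) * a y ^ 2 := by
          congr 1
          · exact Finset.sum_congr rfl fun y _ => Real.sq_sqrt (hμ0 _)
          · exact Finset.sum_congr rfl fun y _ => by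
              rw [mul_pow, Real.sq_sqrt (hμ0 _)]
  have hq : ∀ (g : Yt → ℂ) (x : Xt),
      ‖∑ y, A x y * g y‖ ^ 2 / wX x
        ≤ ∑ y, μ (x, y) * ‖g y‖ ^ 2 := by
    intro g x
    rw [div_le_iff₀ (hwX x)]
    calc ‖∑ y, A x y * g y‖ ^ 2
        ≤ (∑ y, μ (x, y) * ‖g y‖) ^ 2 :=
          pow_le_pow_left₀ (norm_nonneg _) (htriv g x) 2
      _ ≤ wX x * ∑ y, μ (x, y) * ‖g y‖ ^ 2 := hcs x _
      _ = (∑ y, μ (x, y) * ‖g y‖ ^ 2) * wX x := mul_comm _ _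
  have hswap : ∀ (g : Yt → ℂ),
      ∑ x, ∑ y, μ (x, y) * ‖g y‖ ^ 2 = N g := by
    intro g
    rw [hN, Finset.sum_comm]
    exact Finset.sum_congr rfl fun y _ => by rw [← Finset.sum_mul]
  have hQN : ∀ g, Q g ≤ N g := by
    intro g
    rw [← hswap g]
    exact Finset.sum_le_sum fun x _ => hq g x
  have hNnonneg : ∀ g, 0 ≤ N g :=
    fun g => Finset.sum_nonneg fun y _ => mul_nonneg (hwY y).le (sq_nonneg _)
  have hQnonneg : ∀ g, 0 ≤ Q g :=
    fun g => Finset.sum_nonneg fun x _ => div_nonneg (sq_nonneg _) (hwX x).le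
  -- compactness: maximize Q on the sphere N = 1
  set SS : Set (Yt → ℂ) := {g | N g = 1} with hSS
  have habscont : ∀ y : Yt, Continuous fun g : Yt → ℂ => ‖g y‖ :=
    fun y => continuous_norm.comp (continuous_apply y)
  have hNc : Continuous N := by
    rw [hN]
    exact continuous_finset_sum _ fun y _ => continuous_const.mul ((habscont y).pow 2)
  have hQc : Continuous Q := by
    rw [hQ]
    refine continuous_finset_sum _ fun x _ => Continuous.div_const ?_ _
    refine Continuous.pow (continuous_norm.comp ?_) 2
    exact continuous_finset_sum _ fun y _ => continuous_const.mul (continuous_apply y)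
  have hclosed : IsClosed SS := isClosed_singleton.preimage hNc
  have hbdd : Bornology.IsBounded SS := by
    rw [isBounded_iff_forall_norm_le]
    set ε : ℝ := univ.inf' univ_nonempty wY with hε
    have hεpos : 0 < ε := (Finset.lt_inf'_iff _).2 fun y _ => hwY y
    refine ⟨Real.sqrt ε⁻¹, fun g hg => ?_⟩
    rw [pi_norm_le_iff_of_nonneg (Real.sqrt_nonneg _)]
    intro y
    have hg1 : N g = 1 := hg
    have h1 : wY y * ‖g y‖ ^ 2 ≤ 1 := by
      rw [← hg1, hN]
      exact Finset.single_le_sum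
        (f := fun y' => wY y' * ‖g y'‖ ^ 2)
        (fun y' _ => mul_nonneg (hwY y').le (sq_nonneg _)) (mem_univ y)
    have h1' : ε * ‖g y‖ ^ 2 ≤ 1 :=
      le_trans (mul_le_mul_of_nonneg_right (Finset.inf'_le _ (mem_univ y)) (sq_nonneg _)) h1
    have h2 : ‖g y‖ ^ 2 ≤ ε⁻¹ := by
      rw [show ε⁻¹ = 1 / ε by ring, le_div_iff₀ hεpos]
      linarith
    calc ‖g y‖ = Real.sqrt (‖g y‖ ^ 2) := by
          rw [Real.sqrt_sq (norm_nonneg _)]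
      _ ≤ Real.sqrt ε⁻¹ := Real.sqrt_le_sqrt h2
  have hSSne : SS.Nonempty := by
    refine ⟨fun _ => 1, ?_⟩
    show N _ = 1
    rw [hN]
    simpa using hsumwY
  obtain ⟨g₀, hg₀SS, hmax⟩ :=
    (Metric.isCompact_of_isClosed_isBounded hclosed hbdd).exists_isMaxOn hSSne hQc.continuousOn
  have hNg₀ : N g₀ = 1 := hg₀SS
  set M : ℝ := Q g₀ with hM
  have hM0 : 0 ≤ M := hQnonneg g₀
  have hM1 : M ≤ 1 := by rw [hM]; calc Q g₀ ≤ N g₀ := hQN g₀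
                                       _ = 1 := hNg₀
  have hbound : ∀ g, Q g ≤ M * N g := by
    intro g
    by_cases hNg : N g = 0
    · have hg0 : ∀ y, g y = 0 := by
        intro y
        have h1 := (Finset.sum_eq_zero_iff_of_nonneg
          (fun y' (_ : y' ∈ univ) => mul_nonneg (hwY y').le (sq_nonneg
            (‖g y'‖)))).1 hNg y (mem_univ y)
        have h2 : ‖g y‖ ^ 2 = 0 := by
          rcases mul_eq_zero.1 h1 with h | h
          · exact absurd h (hwY y).ne'
          · exact h
        exact norm_eq_zero.1 (pow_eq_zero_iff two_ne_zero |>.1 h2)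
      have : Q g = 0 := by
        show ∑ x, ‖∑ y, A x y * g y‖ ^ 2 / wX x = 0
        refine Finset.sum_eq_zero fun x _ => ?_
        simp [hg0]
      rw [this, hNg, mul_zero]
    · have hNpos : 0 < N g := lt_of_le_of_ne (hNnonneg g) (Ne.symm hNg)
      set s : ℝ := Real.sqrt (N g) with hs
      have hspos : 0 < s := Real.sqrt_pos.2 hNpos
      have hssq : s ^ 2 = N g := Real.sq_sqrt (hNnonneg g)
      set g' : Yt → ℂ := fun y => ((s⁻¹ : ℝ) : ℂ) * g y with hg'
      have habsg' : ∀ y, ‖g' y‖ = s⁻¹ * ‖g y‖ := by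
        intro y
        rw [hg']
        simp only [norm_mul, Complex.norm_real, Real.norm_eq_abs]
        rw [abs_of_nonneg (inv_nonneg.2 hspos.le)]
      have hNg' : N g' = 1 := by
        show ∑ y, wY y * ‖g' y‖ ^ 2 = 1
        have : ∀ y, wY y * ‖g' y‖ ^ 2
            = (s ^ 2)⁻¹ * (wY y * ‖g y‖ ^ 2) := by
          intro y
          rw [habsg', mul_pow, inv_pow]
          ring
        rw [Finset.sum_congr rfl fun y _ => this y, ← Finset.mul_sum]
        show (s ^ 2)⁻¹ * N g = 1
        rw [hssq, inv_mul_cancel₀ hNg]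
      have hQg' : Q g' = (s ^ 2)⁻¹ * Q g := by
        show ∑ x, ‖∑ y, A x y * g' y‖ ^ 2 / wX x = (s ^ 2)⁻¹ * Q g
        have hinner : ∀ x, ∑ y, A x y * g' y = ((s⁻¹ : ℝ) : ℂ) * ∑ y, A x y * g y := by
          intro x
          rw [Finset.mul_sum]
          exact Finset.sum_congr rfl fun y _ => by rw [hg']; ring
        have : ∀ x, ‖∑ y, A x y * g' y‖ ^ 2 / wX x
            = (s ^ 2)⁻¹ * (‖∑ y, A x y * g y‖ ^ 2 / wX x) := by
          intro x
          rw [hinner x, norm_mul, Complex.norm_real, Real.norm_eq_abs, abs_of_nonneg (inv_nonneg.2 hspos.le),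
            mul_pow, inv_pow]
          ring
        rw [Finset.sum_congr rfl fun x _ => this x, ← Finset.mul_sum]
      have hQle : Q g' ≤ M := hmax (by exact hNg' : g' ∈ SS)
      have : (s ^ 2)⁻¹ * Q g ≤ M := by rw [← hQg']; exact hQle
      calc Q g = s ^ 2 * ((s ^ 2)⁻¹ * Q g) := by
            field_simp
        _ ≤ s ^ 2 * M := by
            exact mul_le_mul_of_nonneg_left this (sq_nonneg s)
        _ = M * N g := by rw [hssq]; ring
  rcases lt_or_eq_of_le hM1 with hMlt | hMeq
  · refine ⟨Real.sqrt M, Real.sqrt_nonneg _, ?_, ?_⟩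
    · calc Real.sqrt M < Real.sqrt 1 := Real.sqrt_lt_sqrt hM0 hMlt
        _ = 1 := Real.sqrt_one
    · intro g
      have h := hbound g
      rw [Real.sq_sqrt hM0]
      exact h
  · exfalso
    have hQg₀ : Q g₀ = 1 := hMeq
    set a : Yt → ℝ := fun y => ‖g₀ y‖ with ha
    set L : Xt → ℂ := fun x => ∑ y, A x y * g₀ y with hL
    have hsum_s : ∑ x, ∑ y, μ (x, y) * a y ^ 2 = 1 := by rw [hswap g₀, hNg₀]
    have hsum_q : ∑ x, ‖L x‖ ^ 2 / wX x = 1 := hQg₀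
    have hpoint : ∀ x, ‖L x‖ ^ 2 / wX x = ∑ y, μ (x, y) * a y ^ 2 := by
      have hzero : ∑ x, ((∑ y, μ (x, y) * a y ^ 2) - ‖L x‖ ^ 2 / wX x) = 0 := by
        rw [Finset.sum_sub_distrib, hsum_s, hsum_q, sub_self]
      intro x
      have h1 := (Finset.sum_eq_zero_iff_of_nonneg
        (fun x _ => sub_nonneg.2 (hq g₀ x))).1 hzero x (mem_univ x)
      linarith
    have hmid : ∀ x, (∑ y, μ (x, y) * a y) ^ 2 = wX x * ∑ y, μ (x, y) * a y ^ 2 := by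
      intro x
      refine le_antisymm (hcs x a) ?_
      have h1 : wX x * (‖L x‖ ^ 2 / wX x) = ‖L x‖ ^ 2 :=
        mul_div_cancel₀ _ (hwX x).ne'
      calc wX x * ∑ y, μ (x, y) * a y ^ 2
          = wX x * (‖L x‖ ^ 2 / wX x) := by rw [hpoint x]
        _ = ‖L x‖ ^ 2 := h1
        _ ≤ (∑ y, μ (x, y) * a y) ^ 2 :=
            pow_le_pow_left₀ (norm_nonneg _) (htriv g₀ x) 2
    have habsL : ∀ x, ‖L x‖ = ∑ y, μ (x, y) * a y := by
      intro x
      have h1 : ‖L x‖ ^ 2 = (∑ y, μ (x, y) * a y) ^ 2 := by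
        have := hpoint x
        rw [div_eq_iff (hwX x).ne'] at this
        rw [this, hmid x]
        ring
      have h2 : 0 ≤ ∑ y, μ (x, y) * a y :=
        Finset.sum_nonneg fun y _ => mul_nonneg (hμ0 _) (norm_nonneg _)
      calc ‖L x‖ = Real.sqrt (‖L x‖ ^ 2) :=
            (Real.sqrt_sq (norm_nonneg _)).symm
        _ = Real.sqrt ((∑ y, μ (x, y) * a y) ^ 2) := by rw [h1]
        _ = ∑ y, μ (x, y) * a y := Real.sqrt_sq h2
    -- Step A : |g₀| is locally constant
    have hconst : ∀ x y y', 0 < μ (x, y) → 0 < μ (x, y') → a y = a y' := by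
      intro x y y' hy hy'
      have hid := aux_sq_identity univ (fun y => μ (x, y)) a
      have hzero : ∑ i, ∑ j, μ (x, i) * μ (x, j) * (a i - a j) ^ 2 = 0 := by
        rw [hid]
        have hb1 : (∑ i, μ (x, i)) = wX x := rfl
        rw [hb1]
        linarith [hmid x]
      have hterm1 := (Finset.sum_eq_zero_iff_of_nonneg
        (fun i (_ : i ∈ univ) => Finset.sum_nonneg fun j _ =>
          mul_nonneg (mul_nonneg (hμ0 _) (hμ0 _)) (sq_nonneg _))).1 hzero y (mem_univ y)
      have hterm2 := (Finset.sum_eq_zero_iff_of_nonneg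
        (fun j (_ : j ∈ univ) =>
          mul_nonneg (mul_nonneg (hμ0 _) (hμ0 _)) (sq_nonneg _))).1 hterm1 y' (mem_univ y')
      have h3 : (a y - a y') ^ 2 = 0 := by
        rcases mul_eq_zero.1 hterm2 with h | h
        · rcases mul_eq_zero.1 h with h' | h'
          · exact absurd h' hy.ne'
          · exact absurd h' hy'.ne'
        · exact h
      have := pow_eq_zero_iff two_ne_zero |>.1 h3
      linarith [sub_eq_zero.1 this]
    -- Step B : |g₀| ≡ 1 by connectivity
    set Gr := SimpleGraph.fromRel (fun p q : Xt ⊕ Yt =>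
      ∃ x y, p = Sum.inl x ∧ q = Sum.inr y ∧ 0 < μ (x, y)) with hGr
    have hconn' : Gr.Connected := hconn
    set hfun : Xt ⊕ Yt → ℝ := Sum.elim (fun x => (∑ y, μ (x, y) * a y) / wX x) a with hhfun
    have hkey : ∀ x y, 0 < μ (x, y) → (∑ y', μ (x, y') * a y') / wX x = a y := by
      intro x y hxy
      have h1 : ∑ y', μ (x, y') * a y' = wX x * a y := by
        rw [show wX x = ∑ y', μ (x, y') from rfl, Finset.sum_mul]
        refine Finset.sum_congr rfl fun y' _ => ?_
        rcases eq_or_lt_of_le (hμ0 (x, y')) with h0 | hpos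
        · rw [← h0]; ring
        · rw [hconst x y' y hpos hxy]
      rw [h1]
      exact mul_div_cancel_left₀ _ (hwX x).ne'
    have hadj : ∀ p q, Gr.Adj p q → hfun p = hfun q := by
      intro p q hpq
      rw [hGr, SimpleGraph.fromRel_adj] at hpq
      obtain ⟨-, h | h⟩ := hpq
      · obtain ⟨x, y, hp, hq', hxy⟩ := h
        subst hp; subst hq'
        exact hkey x y hxy
      · obtain ⟨x, y, hq', hp, hxy⟩ := h
        subst hp; subst hq'
        exact (hkey x y hxy).symm
    have haconst : ∀ y y' : Yt, a y = a y' := by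
      intro y y'
      exact aux_walk_const Gr hfun hadj (hconn'.preconnected (Sum.inr y) (Sum.inr y'))
    obtain ⟨y₀⟩ := (inferInstance : Nonempty Yt)
    have hNa : (a y₀) ^ 2 = 1 := by
      calc (a y₀) ^ 2 = (∑ y, wY y) * (a y₀) ^ 2 := by rw [hsumwY, one_mul]
        _ = ∑ y, wY y * a y ^ 2 := by
            rw [Finset.sum_mul]
            exact Finset.sum_congr rfl fun y _ => by rw [haconst y y₀]
        _ = N g₀ := rfl
        _ = 1 := hNg₀
    have ha1 : ∀ y, a y = 1 := by
      intro y
      have h0 : 0 ≤ a y₀ := norm_nonneg _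
      have h2 : (a y₀ - 1) * (a y₀ + 1) = 0 := by nlinarith
      have h3 : a y₀ = 1 := by
        rcases mul_eq_zero.1 h2 with h | h
        · linarith
        · linarith
      rw [haconst y y₀, h3]
    -- Step C : phases align
    set u : Xt → ℂ := fun x => L x * (((wX x : ℝ) : ℂ))⁻¹ with hu
    have hrel : ∀ x y, 0 < μ (x, y) → ω ^ (- t (x, y)).val * g₀ y = u x := by
      intro x y hxy
      have habsL' : ‖L x‖ = wX x := by
        rw [habsL x]
        exact Finset.sum_congr rfl fun y' _ => by rw [ha1 y', mul_one]
      have htri : ‖∑ y', A x y' * g₀ y'‖ = ∑ y', ‖A x y' * g₀ y'‖ := by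
        rw [show (∑ y', A x y' * g₀ y') = L x from rfl, habsL']
        rw [show wX x = ∑ y', μ (x, y') from rfl]
        refine (Finset.sum_congr rfl fun y' _ => ?_).symm
        rw [norm_mul, habsA, show ‖g₀ y'‖ = a y' from rfl, ha1 y', mul_one]
      have h5 := aux_triangle_eq univ (fun y' => A x y' * g₀ y') htri y (mem_univ y)
      rw [show (∑ y', A x y' * g₀ y') = L x from rfl, habsL'] at h5
      rw [norm_mul, habsA, show ‖g₀ y‖ = a y from rfl, ha1 y, mul_one] at h5
      -- h5 : (wX x : ℂ) * (A x y * g₀ y) = (μ (x,y) : ℂ) * L x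
      have hμc : ((μ (x, y) : ℝ) : ℂ) ≠ 0 := Complex.ofReal_ne_zero.2 hxy.ne'
      have hwc : ((wX x : ℝ) : ℂ) ≠ 0 := Complex.ofReal_ne_zero.2 (hwX x).ne'
      rw [hu]
      field_simp
      apply mul_left_cancel₀ hμc
      rw [hA] at h5
      linear_combination h5
    -- Step D : m-th powers are constant
    have hωm : ω ^ m = 1 := hprim.pow_eq_one
    set h₂ : Xt ⊕ Yt → ℂ := Sum.elim (fun x => u x ^ m) (fun y => g₀ y ^ m) with hh₂
    have hadj₂ : ∀ p q, Gr.Adj p q → h₂ p = h₂ q := by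
      intro p q hpq
      rw [hGr, SimpleGraph.fromRel_adj] at hpq
      have key : ∀ x y, 0 < μ (x, y) → u x ^ m = g₀ y ^ m := by
        intro x y hxy
        rw [← hrel x y hxy, mul_pow, ← pow_mul, mul_comm ((- t (x, y)).val) m, pow_mul, hωm,
          one_pow, one_mul]
      obtain ⟨-, h | h⟩ := hpq
      · obtain ⟨x, y, hp, hq', hxy⟩ := h
        subst hp; subst hq'
        exact key x y hxy
      · obtain ⟨x, y, hq', hp, hxy⟩ := h
        subst hp; subst hq'
        exact (key x y hxy).symm
    obtain ⟨x₀⟩ := (inferInstance : Nonempty Xt)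
    set κ : ℂ := g₀ y₀ ^ m with hκ
    have hg₀ne : ∀ y, g₀ y ≠ 0 := by
      intro y hy
      have h1 : ‖g₀ y‖ = 1 := ha1 y
      rw [hy] at h1
      simp at h1
    have hκx : ∀ x, u x ^ m = κ := by
      intro x
      exact aux_walk_const Gr h₂ hadj₂ (hconn'.preconnected (Sum.inl x) (Sum.inr y₀))
    have hκy : ∀ y, g₀ y ^ m = κ := by
      intro y
      exact aux_walk_const Gr h₂ hadj₂ (hconn'.preconnected (Sum.inr y) (Sum.inr y₀))
    have hκ0 : κ ≠ 0 := pow_ne_zero _ (hg₀ne y₀)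
    -- Step E : extract m-th root
    obtain ⟨δ, hδ⟩ := IsAlgClosed.exists_pow_nat_eq κ (show 0 < m by omega)
    have hδ0 : δ ≠ 0 := by
      intro h
      rw [h, zero_pow (show m ≠ 0 by omega)] at hδ
      exact hκ0 hδ.symm
    -- Step F : everything is a power of ω
    have hvx : ∀ x, (u x * δ⁻¹) ^ m = 1 := by
      intro x
      rw [mul_pow, inv_pow, hδ, hκx x, mul_inv_cancel₀ hκ0]
    have hwy : ∀ y, (g₀ y * δ⁻¹) ^ m = 1 := by
      intro y
      rw [mul_pow, inv_pow, hδ, hκy y, mul_inv_cancel₀ hκ0]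
    choose fa hfalt hfaeq using fun x => hprim.eq_pow_of_pow_eq_one (hvx x)
    choose gb hgblt hgbeq using fun y => hprim.eq_pow_of_pow_eq_one (hwy y)
    have hpe : ∀ a b : ℕ, ω ^ a = ω ^ b → ((a : ZMod m) = (b : ZMod m)) := by
      intro a' b' hab
      have hω0 : ω ≠ 0 := hprim.ne_zero (by omega)
      have h1 : ω ^ ((a' : ℤ) - (b' : ℤ)) = 1 := by
        rw [zpow_sub₀ hω0, zpow_natCast, zpow_natCast, hab, div_self (pow_ne_zero _ hω0)]
      have hdvd : (m : ℤ) ∣ (a' : ℤ) - (b' : ℤ) := (hprim.zpow_eq_one_iff_dvd _).1 h1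
      have h2 : ((((a' : ℤ) - (b' : ℤ)) : ℤ) : ZMod m) = 0 :=
        (ZMod.intCast_zmod_eq_zero_iff_dvd _ m).2 hdvd
      push_cast at h2
      exact sub_eq_zero.1 h2
    apply hval
    refine ⟨fun x => -(fa x : ZMod m), fun y => (gb y : ZMod m), fun x y hxy => ?_⟩
    have h1 : ω ^ ((- t (x, y)).val + gb y) = ω ^ fa x := by
      rw [pow_add, hgbeq y, hfaeq x, ← hrel x y hxy]
      ring
    have h2 := hpe _ _ h1
    push_cast at h2
    rw [ZMod.natCast_val, ZMod.cast_id] at h2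
    -- h2 : -t (x,y) + gb y = fa x
    have : (-(fa x : ZMod m)) + (gb y : ZMod m) = t (x, y) := by
      rw [← h2]; ring
    exact this

/-- Exponential decay for connected two-player XOR games of value `< 1`. -/
theorem two_player_xor_decay
    {Xt Yt : Type*} [Fintype Xt] [Fintype Yt] [Nonempty Xt] [Nonempty Yt]
    (μ : Xt × Yt → ℝ) (hμ0 : ∀ p, 0 ≤ μ p) (hμ1 : ∑ p, μ p = 1)
    (m : ℕ) (hm : 2 ≤ m) (t : Xt × Yt → ZMod m)
    (hconn : BipartiteConnected (fun x y => 0 < μ (x, y)))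
    (hval : ¬ ∃ (f : Xt → ZMod m) (g : Yt → ZMod m),
      ∀ x y, 0 < μ (x, y) → f x + g y = t (x, y)) :
    ∃ c : ℝ, 0 < c ∧ ∀ n : ℕ, 1 ≤ n →
      ∀ (F : (Fin n → Xt) → ℂ) (G : (Fin n → Yt) → ℂ),
        (∀ x, ‖F x‖ ≤ 1) → (∀ y, ‖G y‖ ≤ 1) →
        ‖∑ x : Fin n → Xt, ∑ y : Fin n → Yt,
          ((∏ i, μ (x i, y i) : ℝ) : ℂ) * F x * G y *
            ∏ i, rootOfUnity' m ^ (- t (x i, y i)).val‖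
        ≤ (2 : ℝ) ^ (-(c * n)) := by
  classical
  obtain ⟨ρ, hρ0, hρ1, H⟩ := aux_single μ hμ0 hμ1 m hm t hconn hval
  set r : ℝ := max ρ 2⁻¹ with hr
  have hr0 : 0 < r := lt_of_lt_of_le (by norm_num) (le_max_right _ _)
  have hr1 : r < 1 := max_lt hρ1 (by norm_num)
  refine ⟨-Real.logb 2 r, ?_, ?_⟩
  · have : Real.logb 2 r < 0 := Real.logb_neg (by norm_num) hr0 hr1
    linarith
  · intro n hn F G hF hG
    have hpow : (2:ℝ) ^ (-(-Real.logb 2 r * (n:ℝ))) = r ^ n := by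
      rw [neg_mul, neg_neg, Real.rpow_mul (by norm_num : (0:ℝ) ≤ 2),
        Real.rpow_logb (by norm_num) (by norm_num) hr0, Real.rpow_natCast]
    rw [hpow]
    -- setup
    set ω : ℂ := rootOfUnity' m with hω
    set A : Xt → Yt → ℂ := fun x y => ((μ (x, y) : ℝ) : ℂ) * ω ^ (- t (x, y)).val with hA
    set wX : Xt → ℝ := fun x => ∑ y, μ (x, y) with hwXdef
    set wY : Yt → ℝ := fun y => ∑ x, μ (x, y) with hwYdef
    have hwX : ∀ x, 0 < wX x := by
      intro x
      obtain ⟨y, hy⟩ := aux_nbrX _ hconn x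
      exact lt_of_lt_of_le hy (Finset.single_le_sum (fun y' _ => hμ0 (x, y')) (mem_univ y))
    have hwY : ∀ y, 0 < wY y := by
      intro y
      obtain ⟨x, hx⟩ := aux_nbrY _ hconn y
      exact lt_of_lt_of_le hx (Finset.single_le_sum (fun x' _ => hμ0 (x', y)) (mem_univ x))
    have hsumwY : ∑ y, wY y = 1 := by
      rw [hwYdef, ← hμ1, Fintype.sum_prod_type, Finset.sum_comm]
    have hsumwX : ∑ x, wX x = 1 := by rw [hwXdef, ← hμ1, Fintype.sum_prod_type]
    have key := aux_tensor A wX wY hwX (fun y => (hwY y).le) ρ H n G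
    set S : (Fin n → Xt) → ℂ := fun x => ∑ y, (∏ i, A (x i) (y i)) * G y with hS
    set P : (Fin n → Xt) → ℝ := fun x => ∏ i, wX (x i) with hP
    have hPpos : ∀ x, 0 < P x := fun x => Finset.prod_pos fun i _ => hwX _
    have hgoal_eq : (∑ x : Fin n → Xt, ∑ y : Fin n → Yt,
        ((∏ i, μ (x i, y i) : ℝ) : ℂ) * F x * G y *
          ∏ i, rootOfUnity' m ^ (- t (x i, y i)).val)
        = ∑ x : Fin n → Xt, F x * S x := by
      refine Finset.sum_congr rfl fun x _ => ?_
      rw [hS, Finset.mul_sum]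
      refine Finset.sum_congr rfl fun y _ => ?_
      rw [show (∏ i, A (x i) (y i))
          = ((∏ i, μ (x i, y i) : ℝ) : ℂ) * ∏ i, ω ^ (- t (x i, y i)).val by
        rw [Complex.ofReal_prod, ← Finset.prod_mul_distrib]]
      rw [hω]
      ring
    rw [hgoal_eq]
    -- Cauchy–Schwarz
    have hFsum : ∑ x : Fin n → Xt, P x * ‖F x‖ ^ 2 ≤ 1 := by
      calc ∑ x : Fin n → Xt, P x * ‖F x‖ ^ 2
          ≤ ∑ x : Fin n → Xt, P x * 1 := by
            refine Finset.sum_le_sum fun x _ => ?_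
            exact mul_le_mul_of_nonneg_left
              (pow_le_one₀ (norm_nonneg _) (hF x)) (hPpos x).le
        _ = ∑ x : Fin n → Xt, ∏ i, wX (x i) := by simp [hP]
        _ = ∑ x ∈ Fintype.piFinset (fun _ : Fin n => univ), ∏ i, wX (x i) := by
            rw [Fintype.piFinset_univ]
        _ = ∏ _i : Fin n, ∑ j : Xt, wX j := (Finset.prod_univ_sum _ _).symm
        _ = 1 := by rw [hsumwX]; simp
    have hGsum : ∑ y : Fin n → Yt, (∏ i, wY (y i)) * ‖G y‖ ^ 2 ≤ 1 := by
      calc ∑ y : Fin n → Yt, (∏ i, wY (y i)) * ‖G y‖ ^ 2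
          ≤ ∑ y : Fin n → Yt, (∏ i, wY (y i)) * 1 := by
            refine Finset.sum_le_sum fun y _ => ?_
            exact mul_le_mul_of_nonneg_left
              (pow_le_one₀ (norm_nonneg _) (hG y))
              (Finset.prod_nonneg fun i _ => (hwY _).le)
        _ = ∑ y : Fin n → Yt, ∏ i, wY (y i) := by simp
        _ = ∑ y ∈ Fintype.piFinset (fun _ : Fin n => univ), ∏ i, wY (y i) := by
            rw [Fintype.piFinset_univ]
        _ = ∏ _i : Fin n, ∑ j : Yt, wY j := (Finset.prod_univ_sum _ _).symm
        _ = 1 := by rw [hsumwY]; simp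
    have hSsum : ∑ x : Fin n → Xt, ‖S x‖ ^ 2 / P x ≤ ρ ^ (2 * n) := by
      calc ∑ x : Fin n → Xt, ‖S x‖ ^ 2 / P x
          ≤ ρ ^ (2 * n) * ∑ y : Fin n → Yt, (∏ i, wY (y i)) * ‖G y‖ ^ 2 := key
        _ ≤ ρ ^ (2 * n) * 1 := by
            exact mul_le_mul_of_nonneg_left hGsum (pow_nonneg hρ0 _)
        _ = ρ ^ (2 * n) := mul_one _
    have e1 : ∑ x : Fin n → Xt, (Real.sqrt (P x) * ‖F x‖) ^ 2
        = ∑ x : Fin n → Xt, P x * ‖F x‖ ^ 2 :=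
      Finset.sum_congr rfl fun x _ => by rw [mul_pow, Real.sq_sqrt (hPpos x).le]
    have e2 : ∑ x : Fin n → Xt, (‖S x‖ / Real.sqrt (P x)) ^ 2
        = ∑ x : Fin n → Xt, ‖S x‖ ^ 2 / P x :=
      Finset.sum_congr rfl fun x _ => by rw [div_pow, Real.sq_sqrt (hPpos x).le]
    have hnn : (0:ℝ) ≤ ∑ x : Fin n → Xt,
        (Real.sqrt (P x) * ‖F x‖) * (‖S x‖ / Real.sqrt (P x)) :=
      Finset.sum_nonneg fun x _ => mul_nonneg
        (mul_nonneg (Real.sqrt_nonneg _) (norm_nonneg _))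
        (div_nonneg (norm_nonneg _) (Real.sqrt_nonneg _))
    have hρn : Real.sqrt (ρ ^ (2 * n)) = ρ ^ n := by
      rw [show 2 * n = n * 2 by ring, pow_mul, Real.sqrt_sq (pow_nonneg hρ0 n)]
    calc ‖∑ x : Fin n → Xt, F x * S x‖
        ≤ ∑ x : Fin n → Xt, ‖F x * S x‖ := norm_sum_le _ _
      _ = ∑ x : Fin n → Xt,
            (Real.sqrt (P x) * ‖F x‖) * (‖S x‖ / Real.sqrt (P x)) := by
          refine Finset.sum_congr rfl fun x _ => ?_
          have hsqrtne : Real.sqrt (P x) ≠ 0 := (Real.sqrt_pos.2 (hPpos x)).ne'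
          rw [norm_mul]
          field_simp
      _ = Real.sqrt ((∑ x : Fin n → Xt,
            (Real.sqrt (P x) * ‖F x‖) * (‖S x‖ / Real.sqrt (P x))) ^ 2) :=
          (Real.sqrt_sq hnn).symm
      _ ≤ Real.sqrt ((∑ x : Fin n → Xt, P x * ‖F x‖ ^ 2)
            * ∑ x : Fin n → Xt, ‖S x‖ ^ 2 / P x) := by
          refine Real.sqrt_le_sqrt ?_
          rw [← e1, ← e2]
          exact Finset.sum_mul_sq_le_sq_mul_sq univ _ _
      _ ≤ Real.sqrt (1 * ρ ^ (2 * n)) := by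
          refine Real.sqrt_le_sqrt ?_
          refine mul_le_mul hFsum hSsum ?_ ?_
          · exact Finset.sum_nonneg fun x _ => div_nonneg (sq_nonneg _) (hPpos x).le
          · norm_num
      _ = ρ ^ n := by rw [one_mul, hρn]
      _ ≤ r ^ n := pow_le_pow_left₀ hρ0 (le_max_left _ _) n
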